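/- Let ω ∈ ℝ^ν and let α ∈ C²(𝕋^ν, ℝ) satisfy 1 + ω·∂_φ α(φ) > 0 for all φ ∈ 𝕋^ν, and assume the map Ψ : 𝕋^ν → 𝕋^ν, Ψ(φ) = φ + ω α(φ) (mod 2πℤ^ν), is a bijection (hence a C¹ diffeomorphism with inverse of the form θ ↦ θ + ω ᾰ(θ)). Define a₁(θ) := ((ω·∂_φ)² α)(Ψ^{-1}(θ)) / (1 + ω·∂_φ α(Ψ^{-1}(θ)))². Then ∫_{𝕋^ν} a₁(θ) dθ = 0. -/

import Mathlib

open MeasureTheory Filter Set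
open scoped Topology
open scoped BigOperators ENNReal NNReal

noncomputable section

/-- `2π`-periodicity in each coordinate: a function on `ℝ^n` representing a function on the
torus `𝕋^n = (ℝ/2πℤ)^n`. -/
def TorusPeriodic {n : ℕ} (u : (Fin n → ℝ) → ℝ) : Prop :=
  ∀ (x : Fin n → ℝ) (m : Fin n → ℤ), u (fun i => x i + 2 * Real.pi * (m i)) = u x

/-- A fundamental domain of the torus `𝕋^n`. -/
def torusBox (n : ℕ) : Set (Fin n → ℝ) := Set.univ.pi fun _ => Set.Ioc 0 (2 * Real.pi)

/-- The `k`-th Fourier coefficient of a (real-valued) function on the torus `𝕋^n`. -/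
def fourierCoef {n : ℕ} (u : (Fin n → ℝ) → ℝ) (k : Fin n → ℤ) : ℂ :=
  ((((2 * Real.pi) ^ n)⁻¹ : ℝ) : ℂ) *
    ∫ x in torusBox n, (u x : ℂ) * Complex.exp (-Complex.I * ∑ i, (k i : ℂ) * (x i : ℂ))

/-- `⟨k⟩ = max(1, |k|)`. -/
def jap {n : ℕ} (k : Fin n → ℤ) : ℝ := max 1 (Real.sqrt (∑ i, ((k i : ℝ)) ^ 2))

/-- Membership in the Sobolev space `H^s(𝕋^n)` (summability defining the `H^s` norm). -/
def MemSob {n : ℕ} (u : (Fin n → ℝ) → ℝ) (s : ℝ) : Prop :=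
  Summable fun k : Fin n → ℤ => jap k ^ (2 * s) * ‖fourierCoef u k‖ ^ 2

/-- The Sobolev norm `‖u‖_s`. -/
def sobNorm {n : ℕ} (u : (Fin n → ℝ) → ℝ) (s : ℝ) : ℝ :=
  Real.sqrt (∑' k : Fin n → ℤ, jap k ^ (2 * s) * ‖fourierCoef u k‖ ^ 2)

/-- Directional derivative of `u` at `z` in direction `v`. -/
def derivAlong {m : ℕ} (u : (Fin m → ℝ) → ℝ) (v : Fin m → ℝ) (z : Fin m → ℝ) : ℝ :=
  fderiv ℝ u z v

/-- Second directional derivative of `u` at `z` in directions `v`, `w`. -/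
def deriv2Along {m : ℕ} (u : (Fin m → ℝ) → ℝ) (v w : Fin m → ℝ) (z : Fin m → ℝ) : ℝ :=
  fderiv ℝ (fun y => fderiv ℝ u y v) z w

/-- `s₀ := ⌊n/2⌋ + 1`. -/
def s0 (n : ℕ) : ℕ := n / 2 + 1

/-- The `γ₀`-Diophantine condition `|ω̄·ℓ| ≥ γ₀/|ℓ|^ν`. -/
def Diophantine {ν : ℕ} (γ₀ : ℝ) (ωb : Fin ν → ℝ) : Prop :=
  ∀ ℓ : Fin ν → ℤ, ℓ ≠ 0 →
    γ₀ / (Real.sqrt (∑ i, ((ℓ i : ℝ)) ^ 2)) ^ ν ≤ |∑ i, ωb i * (ℓ i : ℝ)|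


section Helpers
/-- The invertible linear map `v ↦ v + ℓ(v) • ω` when `1 + ℓ(ω) ≠ 0`. -/
def dEquiv {E : Type*} [NormedAddCommGroup E] [NormedSpace ℝ E]
    (ℓ : E →L[ℝ] ℝ) (ω : E) (hne : (1 : ℝ) + ℓ ω ≠ 0) : E ≃L[ℝ] E :=
  ContinuousLinearEquiv.equivOfInverse
    (ContinuousLinearMap.id ℝ E + ℓ.smulRight ω)
    (ContinuousLinearMap.id ℝ E - (((1 : ℝ) + ℓ ω)⁻¹ • ℓ).smulRight ω)
    (fun v => by
      simp only [ContinuousLinearMap.add_apply, ContinuousLinearMap.sub_apply,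
        ContinuousLinearMap.id_apply, ContinuousLinearMap.smulRight_apply,
        ContinuousLinearMap.coe_smul', Pi.smul_apply, map_add, ContinuousLinearMap.map_smul, smul_eq_mul]
      match_scalars
      · ring
      · linear_combination (-(ℓ v)) * inv_mul_cancel₀ hne)
    (fun v => by
      simp only [ContinuousLinearMap.add_apply, ContinuousLinearMap.sub_apply,
        ContinuousLinearMap.id_apply, ContinuousLinearMap.smulRight_apply,
        ContinuousLinearMap.coe_smul', Pi.smul_apply, map_add, map_sub, ContinuousLinearMap.map_smul, smul_eq_mul]
      match_scalars
      · ring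
      · linear_combination (-(ℓ v)) * inv_mul_cancel₀ hne)

lemma dEquiv_apply {E : Type*} [NormedAddCommGroup E] [NormedSpace ℝ E]
    (ℓ : E →L[ℝ] ℝ) (ω : E) (hne : (1 : ℝ) + ℓ ω ≠ 0) (v : E) :
    dEquiv ℓ ω hne v = v + ℓ v • ω := by
  simp [dEquiv, ContinuousLinearMap.smulRight_apply]

lemma dEquiv_symm_apply {E : Type*} [NormedAddCommGroup E] [NormedSpace ℝ E]
    (ℓ : E →L[ℝ] ℝ) (ω : E) (hne : (1 : ℝ) + ℓ ω ≠ 0) :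
    (dEquiv ℓ ω hne).symm ω = ((1 : ℝ) + ℓ ω)⁻¹ • ω := by
  rw [dEquiv, ContinuousLinearEquiv.symm_equivOfInverse, ContinuousLinearEquiv.equivOfInverse_apply]
  simp only [ContinuousLinearMap.sub_apply, ContinuousLinearMap.id_apply,
    ContinuousLinearMap.smulRight_apply, ContinuousLinearMap.coe_smul', Pi.smul_apply,
    smul_eq_mul]
  match_scalars
  linear_combination -inv_mul_cancel₀ hne



variable {ν : ℕ}

/-- The lattice `2πℤ^ν` as an additive subgroup of `ℝ^ν`. -/
def latHom (ν : ℕ) : (Fin ν → ℤ) →+ (Fin ν → ℝ) where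
  toFun m := fun i => 2 * Real.pi * (m i)
  map_zero' := by funext i; simp
  map_add' a b := by funext i; simp [Pi.add_apply]; push_cast; ring

def lat (ν : ℕ) : AddSubgroup (Fin ν → ℝ) := (latHom ν).range

instance : Countable (lat ν) := by
  have : Set.Countable (Set.range (latHom ν)) := Set.countable_range _
  exact this.to_subtype

def boxC (c : Fin ν → ℝ) : Set (Fin ν → ℝ) :=
  Set.univ.pi fun i => Set.Ioc (c i) (c i + 2 * Real.pi)

lemma boxC_measurable (c : Fin ν → ℝ) : MeasurableSet (boxC c) :=
  MeasurableSet.univ_pi fun _ => measurableSet_Ioc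

lemma isFD (c : Fin ν → ℝ) : IsAddFundamentalDomain (lat ν) (boxC c) volume := by
  apply IsAddFundamentalDomain.mk' (boxC_measurable c).nullMeasurableSet
  intro x
  have h : ∀ i, ∃! n : ℤ, x i + n • (2 * Real.pi) ∈ Set.Ioc (c i) (c i + 2 * Real.pi) :=
    fun i => existsUnique_add_zsmul_mem_Ioc Real.two_pi_pos (x i) (c i)
  choose m hm hm' using h
  refine ⟨⟨latHom ν m, ⟨m, rfl⟩⟩, ?_, ?_⟩
  · intro i _
    have := hm i
    simpa [latHom, zsmul_eq_mul, mul_comm, add_comm] using this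
  · rintro ⟨-, m', rfl⟩ hg
    have : m' = m := by
      funext i
      refine hm' i (m' i) ?_
      have := hg i (Set.mem_univ i)
      simpa [latHom, zsmul_eq_mul, mul_comm, add_comm] using this
    simp [this]

lemma periodic_invariant {u : (Fin ν → ℝ) → ℝ} (hu : TorusPeriodic u) :
    ∀ (g : lat ν) (x : Fin ν → ℝ), u (g +ᵥ x) = u x := by
  rintro ⟨-, m, rfl⟩ x
  have := hu x m
  have e : (latHom ν m) +ᵥ x = fun i => x i + 2 * Real.pi * (m i) := by
    funext i
    show latHom ν m i + x i = _
    simp [latHom]; ring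
  show u ((latHom ν m) +ᵥ x) = u x
  rw [e, this]

lemma integral_translate {u : (Fin ν → ℝ) → ℝ} (hu : TorusPeriodic u) (v : Fin ν → ℝ) :
    ∫ x in torusBox ν, u (x + v) = ∫ x in torusBox ν, u x := by
  have h0 : IsAddFundamentalDomain (lat ν) (torusBox ν) volume := by
    have := isFD (ν := ν) 0
    simpa [boxC, torusBox] using this
  have hv := isFD (ν := ν) v
  have key : ∫ x in torusBox ν, u x = ∫ x in boxC v, u x :=
    h0.setIntegral_eq hv (periodic_invariant hu)
  have hpre : (fun x : Fin ν → ℝ => x + v) ⁻¹' (boxC v) = torusBox ν := by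
    ext x
    simp only [boxC, torusBox, Set.mem_preimage, Set.mem_pi, Set.mem_univ, forall_true_left,
      Set.mem_Ioc, Pi.add_apply]
    constructor
    · intro h i; have := h i; constructor <;> linarith [this.1, this.2]
    · intro h i; have := h i; constructor <;> linarith [this.1, this.2]
  have emb : MeasurableEmbedding (fun x : Fin ν → ℝ => x + v) :=
    (Homeomorph.addRight v).isClosedEmbedding.measurableEmbedding
  have mp : MeasurePreserving (fun x : Fin ν → ℝ => x + v) volume volume :=
    measurePreserving_add_right volume v
  have := mp.setIntegral_preimage_emb emb u (boxC v)
  rw [hpre] at this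
  rw [key, ← this]

lemma torusBox_subset_ball : torusBox ν ⊆ Metric.closedBall 0 (2 * Real.pi) := by
  intro x hx
  rw [Metric.mem_closedBall, dist_zero_right]
  refine (pi_norm_le_iff_of_nonneg (by positivity)).2 fun i => ?_
  have := hx i (Set.mem_univ i)
  rw [Real.norm_eq_abs, abs_le]
  constructor <;> [linarith [this.1, Real.pi_pos]; exact this.2]

lemma integrableOn_box_of_continuous {u : (Fin ν → ℝ) → ℝ} (hu : Continuous u) :
    IntegrableOn u (torusBox ν) := by
  have hb : Bornology.IsBounded (torusBox ν) :=
    (Metric.isBounded_closedBall (x := (0 : Fin ν → ℝ)) (r := 2 * Real.pi)).subset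
      torusBox_subset_ball
  have hcomp : IsCompact (closure (torusBox ν)) :=
    Metric.isCompact_of_isClosed_isBounded isClosed_closure hb.closure
  exact ((hu.continuousOn).integrableOn_compact hcomp).mono_set subset_closure

lemma integral_derivAlong_zero {F : (Fin ν → ℝ) → ℝ} (hF : ContDiff ℝ 1 F)
    (hper : TorusPeriodic F) (w : Fin ν → ℝ) :
    ∫ x in torusBox ν, fderiv ℝ F x w = 0 := by
  set K : Set (Fin ν → ℝ) := Metric.closedBall 0 (2 * Real.pi + ‖w‖) with hK
  have hKc : IsCompact K := isCompact_closedBall _ _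
  have hconv : Convex ℝ K := convex_closedBall _ _
  have hcont : Continuous fun x => ‖fderiv ℝ F x‖ :=
    (hF.continuous_fderiv one_ne_zero).norm
  obtain ⟨M, hM⟩ := hKc.exists_bound_of_continuousOn hcont.continuousOn
  have hdiff : Differentiable ℝ F := hF.differentiable one_ne_zero
  set a : ℕ → ℝ := fun n => ((n : ℝ) + 1)⁻¹ with ha
  have ha_pos : ∀ n, 0 < a n := fun n => by positivity
  have ha_le : ∀ n, a n ≤ 1 := fun n => by
    rw [ha]; rw [inv_le_one_iff₀]; right; simp [le_add_iff_nonneg_left]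
  set G : ℕ → (Fin ν → ℝ) → ℝ := fun n x => (F (x + (a n) • w) - F x) / a n with hG
  -- membership in K
  have hmem : ∀ x ∈ torusBox ν, ∀ t : ℝ, 0 ≤ t → t ≤ 1 → x + t • w ∈ K := by
    intro x hx t ht0 ht1
    have h1 : ‖x‖ ≤ 2 * Real.pi := by
      have := torusBox_subset_ball hx; rwa [Metric.mem_closedBall, dist_zero_right] at this
    have : ‖x + t • w‖ ≤ ‖x‖ + ‖t • w‖ := norm_add_le _ _
    have h2 : ‖t • w‖ ≤ ‖w‖ := by
      rw [norm_smul, Real.norm_eq_abs, abs_of_nonneg ht0]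
      nlinarith [norm_nonneg w]
    rw [hK, Metric.mem_closedBall, dist_zero_right]
    linarith
  have hbound : ∀ n, ∀ x ∈ torusBox ν, |G n x| ≤ M * ‖w‖ := by
    intro n x hx
    have hx0 : x ∈ K := by simpa using hmem x hx 0 le_rfl zero_le_one
    have hx1 : x + a n • w ∈ K := hmem x hx (a n) (ha_pos n).le (ha_le n)
    have hmv : ‖F (x + a n • w) - F x‖ ≤ M * ‖(x + a n • w) - x‖ := by
      refine hconv.norm_image_sub_le_of_norm_fderiv_le
        (fun y _ => hdiff y) (fun y hy => by simpa using hM y hy) hx0 hx1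
    rw [add_sub_cancel_left, norm_smul] at hmv
    rw [Real.norm_eq_abs (a n), abs_of_pos (ha_pos n)] at hmv
    have habs : |G n x| = |F (x + a n • w) - F x| / a n := by
      rw [hG]; rw [abs_div, abs_of_pos (ha_pos n)]
    rw [habs, div_le_iff₀ (ha_pos n)]
    calc |F (x + a n • w) - F x| = ‖F (x + a n • w) - F x‖ := (Real.norm_eq_abs _).symm
      _ ≤ M * (a n * ‖w‖) := hmv
      _ = M * ‖w‖ * a n := by ring
  have hlim : ∀ x : Fin ν → ℝ, Tendsto (fun n => G n x) atTop (𝓝 (fderiv ℝ F x w)) := by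
    intro x
    have hline : HasDerivAt (fun t : ℝ => x + t • w) w 0 := by
      simpa using ((hasDerivAt_id (0:ℝ)).smul_const w).const_add x
    have hcomp : HasDerivAt (fun t : ℝ => F (x + t • w)) (fderiv ℝ F x w) 0 := by
      have h : HasFDerivAt F (fderiv ℝ F x) (x + (0:ℝ) • w) := by
        simpa using (hdiff x).hasFDerivAt
      have h2 := h.comp_hasDerivAt (0:ℝ) hline
      exact h2
    have hslope := hasDerivAt_iff_tendsto_slope.mp hcomp
    have ha_tend : Tendsto a atTop (𝓝[≠] (0:ℝ)) := by
      refine tendsto_nhdsWithin_of_tendsto_nhds_of_eventually_within a ?_ ?_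
      · simpa [ha, one_div] using tendsto_one_div_add_atTop_nhds_zero_nat (𝕜 := ℝ)
      · exact Eventually.of_forall fun n => (ha_pos n).ne'
    have := hslope.comp ha_tend
    refine this.congr fun n => ?_
    show slope (fun t => F (x + t • w)) 0 (a n) = G n x
    rw [slope_def_field, hG]
    simp
  have hFc : Continuous F := hF.continuous
  have hGint : ∀ n, ∫ x in torusBox ν, G n x = 0 := by
    intro n
    have h1 : IntegrableOn (fun x => F (x + a n • w)) (torusBox ν) :=
      integrableOn_box_of_continuous (hFc.comp (continuous_id.add continuous_const))
    have h2 : IntegrableOn F (torusBox ν) := integrableOn_box_of_continuous hFc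
    have hz : ∫ x in torusBox ν, (F (x + a n • w) - F x) = 0 := by
      rw [integral_sub h1 h2, integral_translate hper (a n • w), sub_self]
    calc ∫ x in torusBox ν, G n x
        = (∫ x in torusBox ν, (F (x + a n • w) - F x)) / a n := integral_div _ _
      _ = 0 := by rw [hz, zero_div]
  have hGcont : ∀ n, Continuous (G n) := fun n =>
    ((hFc.comp (continuous_id.add continuous_const)).sub hFc).div_const _
  have hmeasbox : MeasurableSet (torusBox ν) := MeasurableSet.univ_pi fun _ => measurableSet_Ioc
  have hμfin : volume (torusBox ν) < ⊤ :=
    lt_of_le_of_lt (measure_mono torusBox_subset_ball)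
      (isCompact_closedBall _ _).measure_lt_top
  have hbdd_int : Integrable (fun _ : Fin ν → ℝ => M * ‖w‖)
      (volume.restrict (torusBox ν)) := by
    rw [integrable_const_iff]
    right
    exact ⟨by rwa [Measure.restrict_apply_univ]⟩
  have htend := tendsto_integral_of_dominated_convergence
      (F := G) (f := fun x => fderiv ℝ F x w) (bound := fun _ => M * ‖w‖)
      (fun n => (hGcont n).aestronglyMeasurable)
      hbdd_int
      (fun n => (ae_restrict_iff' hmeasbox).2 (Eventually.of_forall fun x hx => by
        simpa [Real.norm_eq_abs] using hbound n x hx))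
      (Eventually.of_forall fun x => hlim x)
  have hzero : Tendsto (fun _ : ℕ => (0:ℝ)) atTop
      (𝓝 (∫ x in torusBox ν, fderiv ℝ F x w)) :=
    htend.congr fun n => hGint n
  exact (tendsto_nhds_unique hzero tendsto_const_nhds)

end Helpers

/-- The coefficient `a₁(θ) = (ω·∂_φ)²α(Ψ⁻¹θ) / (1+ω·∂_φ α(Ψ⁻¹θ))²` of the first-order term
has zero average on `𝕋^ν`, where `Ψ(φ) = φ + ωα(φ)`. -/
theorem a1_zero_average
    (ν : ℕ) (hν : 1 ≤ ν) (ω : Fin ν → ℝ)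
    (α : (Fin ν → ℝ) → ℝ) (hα : ContDiff ℝ 2 α) (hper : TorusPeriodic α)
    (hpos : ∀ φ, 0 < 1 + derivAlong α ω φ)
    (hbij : Function.Bijective (fun φ : Fin ν → ℝ => fun i => φ i + ω i * α φ)) :
    (∫ θ in torusBox ν,
        deriv2Along α ω ω
            (Function.invFun (fun φ : Fin ν → ℝ => fun i => φ i + ω i * α φ) θ)
          / (1 + derivAlong α ω
              (Function.invFun (fun φ : Fin ν → ℝ => fun i => φ i + ω i * α φ) θ)) ^ 2)
      = 0 := by
  classical
  set Ψ : (Fin ν → ℝ) → (Fin ν → ℝ) := fun φ => fun i => φ i + ω i * α φ with hΨdef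
  have hα1 : ContDiff ℝ 1 α := hα.of_le (by norm_num)
  have hαd : Differentiable ℝ α := hα1.differentiable one_ne_zero
  set g : (Fin ν → ℝ) → ℝ := fun φ => fderiv ℝ α φ ω with hgdef
  have hgpos : ∀ φ, 0 < 1 + g φ := hpos
  have hne : ∀ φ, (1 : ℝ) + fderiv ℝ α φ ω ≠ 0 := fun φ => (hgpos φ).ne'
  have hΨeq : Ψ = fun φ => φ + α φ • ω := by
    funext φ i
    simp [hΨdef, Pi.add_apply, mul_comm]
  have hΨcd : ContDiff ℝ 2 Ψ := by
    rw [hΨeq]; exact contDiff_id.add (hα.smul contDiff_const)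
  set E : (Fin ν → ℝ) → ((Fin ν → ℝ) ≃L[ℝ] (Fin ν → ℝ)) :=
    fun φ => dEquiv (fderiv ℝ α φ) ω (hne φ) with hEdef
  have hfd : ∀ φ, HasFDerivAt Ψ (E φ : (Fin ν → ℝ) →L[ℝ] (Fin ν → ℝ)) φ := by
    intro φ
    have h1 : HasFDerivAt (fun φ => φ + α φ • ω)
        (ContinuousLinearMap.id ℝ (Fin ν → ℝ) + (fderiv ℝ α φ).smulRight ω) φ :=
      (hasFDerivAt_id φ).add ((hαd φ).hasFDerivAt.smul_const ω)
    rw [hΨeq]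
    exact h1
  have hstrict : ∀ φ, HasStrictFDerivAt Ψ (E φ : (Fin ν → ℝ) →L[ℝ] (Fin ν → ℝ)) φ :=
    fun φ => (hΨcd.contDiffAt).hasStrictFDerivAt' (hfd φ) (by norm_num)
  set Ψinv := Function.invFun Ψ with hΨinvdef
  have hleft : ∀ x, Ψinv (Ψ x) = x := Function.leftInverse_invFun hbij.1
  have hright : ∀ y, Ψ (Ψinv y) = y := Function.rightInverse_invFun hbij.2
  have hinvd : ∀ θ, HasFDerivAt Ψinv
      ((E (Ψinv θ)).symm : (Fin ν → ℝ) →L[ℝ] (Fin ν → ℝ)) θ := by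
    intro θ
    have h := ((hstrict (Ψinv θ)).to_local_left_inverse
      (Filter.Eventually.of_forall hleft)).hasFDerivAt
    rwa [hright θ] at h
  have hinvcd : ContDiff ℝ 1 Ψinv := by
    rw [contDiff_iff_contDiffAt]
    intro θ
    have hca : ContDiffAt ℝ 2 Ψ (Ψinv θ) := hΨcd.contDiffAt
    have h1 := hca.to_localInverse (f' := E (Ψinv θ)) (hfd (Ψinv θ)) (by norm_num)
    have h2 := ((hca.hasStrictFDerivAt' (hfd (Ψinv θ)) (by norm_num))).localInverse_unique
      (Filter.Eventually.of_forall hleft)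
    have h3 : ContDiffAt ℝ 2 Ψinv (Ψ (Ψinv θ)) := h1.congr_of_eventuallyEq h2
    rw [hright θ] at h3
    exact h3.of_le (by norm_num)
  -- C¹ of g, h, F
  have hg1 : ContDiff ℝ 1 g := by
    have := (hα.fderiv_right (m := 1) (by norm_num)).clm_apply (contDiff_const (c := ω))
    exact this
  set hfun : (Fin ν → ℝ) → ℝ := fun θ => g (Ψinv θ) with hhdef
  have hh1 : ContDiff ℝ 1 hfun := hg1.comp hinvcd
  have hposh : ∀ θ, 0 < 1 + hfun θ := fun θ => hgpos (Ψinv θ)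
  set F : (Fin ν → ℝ) → ℝ := fun θ => Real.log (1 + hfun θ) with hFdef
  have hF1 : ContDiff ℝ 1 F := (contDiff_const.add hh1).log (fun θ => (hposh θ).ne')
  -- periodicity
  have hΨlat : ∀ (x : Fin ν → ℝ) (m : Fin ν → ℤ),
      Ψ (x + latHom ν m) = Ψ x + latHom ν m := by
    intro x m
    have hα' : α (x + latHom ν m) = α x := by
      have h0 := hper x m
      have e : (fun i => x i + 2 * Real.pi * (m i)) = x + latHom ν m := by
        funext i; simp [latHom]
      rwa [e] at h0
    funext i
    simp only [hΨdef, Pi.add_apply, hα']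
    show (x i + latHom ν m i) + ω i * α x = (x i + ω i * α x) + latHom ν m i
    ring
  have hαper' : ∀ (y : Fin ν → ℝ) (m : Fin ν → ℤ), α (y + latHom ν m) = α y := by
    intro y m
    have h0 := hper y m
    have e : (fun i => y i + 2 * Real.pi * (m i)) = y + latHom ν m := by
      funext i; simp [latHom]
    rwa [e] at h0
  have hfderiv_per : ∀ (x : Fin ν → ℝ) (m : Fin ν → ℤ),
      fderiv ℝ α (x + latHom ν m) = fderiv ℝ α x := by
    intro x m
    set c := latHom ν m with hc
    have h1 : HasFDerivAt (fun y => α (y + c)) (fderiv ℝ α (x + c)) x := by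
      have htr : HasFDerivAt (fun y : Fin ν → ℝ => y + c)
          (ContinuousLinearMap.id ℝ (Fin ν → ℝ)) x := (hasFDerivAt_id x).add_const c
      have hcomp := ((hαd (x + c)).hasFDerivAt).comp x htr
      exact hcomp
    have hfun' : (fun y => α (y + c)) = α := funext fun y => hαper' y m
    rw [hfun'] at h1
    exact (h1.fderiv).symm
  have hΨinvlat : ∀ (θ : Fin ν → ℝ) (m : Fin ν → ℤ),
      Ψinv (θ + latHom ν m) = Ψinv θ + latHom ν m := by
    intro θ m
    apply hbij.1
    show Ψ _ = Ψ _
    rw [hright, hΨlat, hright]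
  have hFper : TorusPeriodic F := by
    intro θ m
    have e : (fun i => θ i + 2 * Real.pi * (m i)) = θ + latHom ν m := by
      funext i; simp [latHom]
    rw [e]
    show Real.log (1 + g (Ψinv (θ + latHom ν m))) = Real.log (1 + g (Ψinv θ))
    rw [hΨinvlat, hgdef]
    simp only
    rw [hfderiv_per]
  -- pointwise identity
  have hkey : ∀ θ, fderiv ℝ F θ ω =
      fderiv ℝ (fun y => fderiv ℝ α y ω) (Ψinv θ) ω / (1 + fderiv ℝ α (Ψinv θ) ω) ^ 2 := by
    intro θ
    have hgd : HasFDerivAt g (fderiv ℝ g (Ψinv θ)) (Ψinv θ) :=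
      (hg1.differentiable one_ne_zero (Ψinv θ)).hasFDerivAt
    have hhd : HasFDerivAt hfun
        ((fderiv ℝ g (Ψinv θ)).comp
          ((E (Ψinv θ)).symm : (Fin ν → ℝ) →L[ℝ] (Fin ν → ℝ))) θ :=
      hgd.comp θ (hinvd θ)
    have hFd := ((hasFDerivAt_const (1:ℝ) θ).add hhd).log (hposh θ).ne'
    rw [show fderiv ℝ F θ = _ from hFd.fderiv]
    simp only [ContinuousLinearMap.coe_smul', Pi.smul_apply, Pi.add_apply, ContinuousLinearMap.add_apply,
      ContinuousLinearMap.zero_apply, ContinuousLinearMap.coe_comp', Function.comp_apply,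
      zero_add, smul_eq_mul]
    have hsym : ((E (Ψinv θ)).symm : (Fin ν → ℝ) →L[ℝ] (Fin ν → ℝ)) ω
        = ((1 : ℝ) + fderiv ℝ α (Ψinv θ) ω)⁻¹ • ω := dEquiv_symm_apply _ _ _
    rw [hsym, ContinuousLinearMap.map_smul, smul_eq_mul]
    have hht : hfun θ = fderiv ℝ α (Ψinv θ) ω := rfl
    have hgg : fderiv ℝ g (Ψinv θ) ω = fderiv ℝ (fun y => fderiv ℝ α y ω) (Ψinv θ) ω := rfl
    rw [hht, hgg]
    set t := fderiv ℝ α (Ψinv θ) ω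
    set D2 := fderiv ℝ (fun y => fderiv ℝ α y ω) (Ψinv θ) ω
    have h1t : (1 : ℝ) + t ≠ 0 := hne (Ψinv θ)
    rw [eq_div_iff (pow_ne_zero 2 h1t), pow_two]
    have hrw : ((1:ℝ)+t)⁻¹ * ((1+t)⁻¹ * D2) * ((1+t)*(1+t))
        = D2 * (((1+t)⁻¹ * (1+t)) * ((1+t)⁻¹ * (1+t))) := by ring
    rw [hrw, inv_mul_cancel₀ h1t]
    ring
  -- conclusion
  have hzero := integral_derivAlong_zero hF1 hFper ω
  have heq : ∀ θ, deriv2Along α ω ω (Ψinv θ) / (1 + derivAlong α ω (Ψinv θ)) ^ 2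
      = fderiv ℝ F θ ω := by
    intro θ
    rw [hkey θ]
    rfl
  calc (∫ θ in torusBox ν,
        deriv2Along α ω ω (Ψinv θ) / (1 + derivAlong α ω (Ψinv θ)) ^ 2)
      = ∫ θ in torusBox ν, fderiv ℝ F θ ω :=
        integral_congr_ae (Filter.Eventually.of_forall fun θ => heq θ)
    _ = 0 := hzero
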